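/- arXiv:1309.0003 — 6 statements merged into one kernel-verified Lean document; each statement's English description precedes it below -/
import Mathlib

section
/- Let X_1, ..., X_n be independent random vectors of dimension k, where X_i = (X_{1,i}, ..., X_{k,i}), such that for every i, X_{ℓ,i} ≥ 0 for all ℓ = 1, ..., k and Σ_{ℓ=1}^k X_{ℓ,i} ≤ 1. Let X̄_n = (1/n) Σ_{i=1}^n X_i, let μ_ℓ = (1/n) Σ_{i=1}^n E[X_{ℓ,i}] for ℓ = 1, ..., k, and set μ_0 = 1 − Σ_{ℓ=1}^k μ_ℓ. Let z_0, z_1, ..., z_k be positive real numbers with Σ_{ℓ=0}^k z_ℓ = 1, and suppose z_ℓ ≤ μ_ℓ for all ℓ = 1, ..., k. Then Pr{X̄_n ≤ z componentwise} ≤ ∏_{ℓ=0}^k (μ_ℓ / z_ℓ)^{n z_ℓ}, where z = (z_1, ..., z_k). -/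
open MeasureTheory ProbabilityTheory Finset

lemma aux_integral_prod {Ω : Type*} [MeasureSpace Ω] [IsProbabilityMeasure (ℙ : Measure Ω)]
    {ι : Type*} {f : ι → Ω → ℝ}
    (h : iIndepFun f ℙ) (hm : ∀ i, Measurable (f i)) (s : Finset ι) :
    ∫ ω, ∏ i ∈ s, f i ω = ∏ i ∈ s, ∫ ω, f i ω := by
  classical
  refine Finset.induction_on s (by simp) ?_
  intro a s ha ih
  have hfn : (∏ i ∈ s, f i) = fun ω => ∏ i ∈ s, f i ω := Finset.prod_fn s f
  have hprodmeas : Measurable (fun ω => ∏ i ∈ s, f i ω) := by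
    have := Finset.measurable_prod s fun i (_ : i ∈ s) => hm i
    exact this
  have hind : IndepFun (f a) (fun ω => ∏ i ∈ s, f i ω) ℙ := by
    have := (h.indepFun_finsetProd_of_notMem hm ha).symm
    rwa [hfn] at this
  calc ∫ ω, ∏ i ∈ insert a s, f i ω = ∫ ω, f a ω * ∏ i ∈ s, f i ω := by
        simp [Finset.prod_insert ha]
    _ = (∫ ω, f a ω) * ∫ ω, ∏ i ∈ s, f i ω :=
        hind.integral_mul_eq_mul_integral (hm a).aestronglyMeasurable hprodmeas.aestronglyMeasurable
    _ = ∏ i ∈ insert a s, ∫ ω, f i ω := by rw [Finset.prod_insert ha, ih]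

/-- Concentration inequality for independent random vectors bounded in the simplex
(lower-tail version): if `z ≤ μ` componentwise, then
`Pr{X̄ₙ ≤ z} ≤ ∏_{ℓ=0}^k (μ_ℓ / z_ℓ)^(n z_ℓ)`. -/
theorem concentration_le
    {Ω : Type*} [MeasureSpace Ω] [IsProbabilityMeasure (ℙ : Measure Ω)]
    (n k : ℕ) (hn : 0 < n)
    (X : Fin n → Fin k → Ω → ℝ)
    (hmeas : ∀ i ℓ, Measurable (X i ℓ))
    (hindep : iIndepFun
      (fun i => fun ω ℓ => X i ℓ ω) ℙ)
    (hnonneg : ∀ i ℓ ω, 0 ≤ X i ℓ ω)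
    (hsum : ∀ i ω, ∑ ℓ, X i ℓ ω ≤ 1)
    (μ : Fin k → ℝ) (hμ : ∀ ℓ, μ ℓ = (∑ i, ∫ ω, X i ℓ ω) / n)
    (μ0 : ℝ) (hμ0 : μ0 = 1 - ∑ ℓ, μ ℓ)
    (z : Fin k → ℝ) (z0 : ℝ)
    (hz0pos : 0 < z0) (hzpos : ∀ ℓ, 0 < z ℓ)
    (hzsum : z0 + ∑ ℓ, z ℓ = 1)
    (hzμ : ∀ ℓ, z ℓ ≤ μ ℓ) :
    ℙ {ω | ∀ ℓ, (∑ i, X i ℓ ω) / n ≤ z ℓ} ≤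
      ENNReal.ofReal ((μ0 / z0) ^ ((n : ℝ) * z0) *
        ∏ ℓ, (μ ℓ / z ℓ) ^ ((n : ℝ) * z ℓ)) := by
  classical
  have hnpos : (0:ℝ) < n := Nat.cast_pos.mpr hn
  have hbd : ∀ (f : Ω → ℝ), Measurable f → (∀ ω, 0 ≤ f ω) → (∀ ω, f ω ≤ 1) →
      Integrable f ℙ := fun f hf h0 h1 =>
    (integrable_const (1:ℝ)).mono' hf.aestronglyMeasurable
      (Filter.Eventually.of_forall fun ω => by
        rw [Real.norm_eq_abs, abs_of_nonneg (h0 ω)]; exact h1 ω)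
  have hXle1 : ∀ i ℓ ω, X i ℓ ω ≤ 1 := fun i ℓ ω =>
    le_trans (Finset.single_le_sum (fun ℓ' _ => hnonneg i ℓ' ω) (Finset.mem_univ ℓ)) (hsum i ω)
  have hXint : ∀ i ℓ, Integrable (X i ℓ) ℙ := fun i ℓ =>
    hbd _ (hmeas i ℓ) (hnonneg i ℓ) (hXle1 i ℓ)
  set m : Fin n → Fin k → ℝ := fun i ℓ => ∫ ω, X i ℓ ω with hm
  have hmnonneg : ∀ i ℓ, 0 ≤ m i ℓ := fun i ℓ => integral_nonneg fun ω => hnonneg i ℓ ω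
  have hmsum : ∀ i, ∑ ℓ, m i ℓ ≤ 1 := by
    intro i
    have h1 : ∫ ω, ∑ ℓ, X i ℓ ω ≤ ∫ _ω, (1:ℝ) :=
      integral_mono (integrable_finset_sum _ fun ℓ _ => hXint i ℓ) (integrable_const 1) (hsum i)
    rwa [integral_finset_sum _ (fun ℓ _ => hXint i ℓ), integral_const, probReal_univ,
      one_smul] at h1
  have hμn : ∀ ℓ, (n:ℝ) * μ ℓ = ∑ i, m i ℓ := fun ℓ => by
    rw [hμ ℓ]; field_simp; rfl
  have hμpos : ∀ ℓ, 0 < μ ℓ := fun ℓ => lt_of_lt_of_le (hzpos ℓ) (hzμ ℓ)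
  have hμsum_le : ∑ ℓ, μ ℓ ≤ 1 := by
    have h : (n:ℝ) * ∑ ℓ, μ ℓ ≤ n := by
      rw [Finset.mul_sum]
      calc ∑ ℓ, (n:ℝ) * μ ℓ = ∑ ℓ, ∑ i, m i ℓ := Finset.sum_congr rfl fun ℓ _ => hμn ℓ
        _ = ∑ i, ∑ ℓ, m i ℓ := Finset.sum_comm
        _ ≤ ∑ _i : Fin n, (1:ℝ) := Finset.sum_le_sum fun i _ => hmsum i
        _ = n := by simp
    have h' : (n:ℝ) * ∑ ℓ, μ ℓ ≤ (n:ℝ) * 1 := by linarith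
    exact le_of_mul_le_mul_left h' hnpos
  have hμ0nonneg : 0 ≤ μ0 := by rw [hμ0]; linarith
  have hzs : ∑ ℓ, z ℓ = 1 - z0 := by linarith
  have hμ0z0 : μ0 ≤ z0 := by
    have h1 : ∑ ℓ, z ℓ ≤ ∑ ℓ, μ ℓ := Finset.sum_le_sum fun ℓ _ => hzμ ℓ
    rw [hμ0]; linarith
  rcases eq_or_lt_of_le hμ0nonneg with hμ0eq | hμ0pos
  · -- degenerate case: μ0 = 0, the probability is 0
    set W : Ω → ℝ := fun ω => ∑ i, ∑ ℓ, X i ℓ ω with hW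
    have hWint : Integrable W ℙ :=
      integrable_finset_sum _ fun i _ => integrable_finset_sum _ fun ℓ _ => hXint i ℓ
    have hWle : ∀ ω, W ω ≤ n := fun ω => by
      calc W ω ≤ ∑ _i : Fin n, (1:ℝ) := Finset.sum_le_sum fun i _ => hsum i ω
        _ = n := by simp
    have hWn : ∫ ω, W ω = n := by
      have hintW : ∫ ω, W ω = ∑ i, ∑ ℓ, m i ℓ := by
        rw [hW, integral_finset_sum _ fun i _ => integrable_finset_sum _ fun ℓ _ => hXint i ℓ]
        exact Finset.sum_congr rfl fun i _ => integral_finset_sum _ fun ℓ _ => hXint i ℓ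
      rw [hintW, Finset.sum_comm]
      calc ∑ ℓ, ∑ i, m i ℓ = ∑ ℓ, (n:ℝ) * μ ℓ := Finset.sum_congr rfl fun ℓ _ => (hμn ℓ).symm
        _ = (n:ℝ) * ∑ ℓ, μ ℓ := (Finset.mul_sum _ _ _).symm
        _ = n := by
            have : ∑ ℓ, μ ℓ = 1 := by linarith
            rw [this, mul_one]
    have h0 : ∫ ω, ((n:ℝ) - W ω) = 0 := by
      rw [integral_sub (integrable_const _) hWint, integral_const, probReal_univ,
        one_smul, hWn, sub_self]
    have hae : (fun ω => (n:ℝ) - W ω) =ᵐ[ℙ] 0 :=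
      (integral_eq_zero_iff_of_nonneg
        (fun ω => by show (0:ℝ) ≤ (n:ℝ) - W ω; linarith [hWle ω])
        ((integrable_const _).sub hWint)).mp h0
    have hnull : ℙ {ω | ¬((n:ℝ) - W ω = 0)} = 0 := by
      have := hae
      rw [Filter.EventuallyEq, ae_iff] at this
      simpa using this
    have hsub : {ω | ∀ ℓ, (∑ i, X i ℓ ω) / n ≤ z ℓ} ⊆ {ω | ¬((n:ℝ) - W ω = 0)} := by
      intro ω hω
      simp only [Set.mem_setOf_eq] at hω ⊢
      have hXsum : ∀ ℓ, ∑ i, X i ℓ ω ≤ (n:ℝ) * z ℓ := fun ℓ => by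
        have h1 := hω ℓ; rw [div_le_iff₀ hnpos] at h1; linarith
      have hWb : W ω ≤ (n:ℝ) * (1 - z0) := by
        calc W ω = ∑ ℓ, ∑ i, X i ℓ ω := Finset.sum_comm
          _ ≤ ∑ ℓ, (n:ℝ) * z ℓ := Finset.sum_le_sum fun ℓ _ => hXsum ℓ
          _ = (n:ℝ) * ∑ ℓ, z ℓ := (Finset.mul_sum _ _ _).symm
          _ = (n:ℝ) * (1 - z0) := by rw [hzs]
      intro hcon
      nlinarith
    have hA0 : ℙ {ω | ∀ ℓ, (∑ i, X i ℓ ω) / n ≤ z ℓ} = 0 := measure_mono_null hsub hnull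
    rw [hA0]
    exact bot_le
  · -- main case: 0 < μ0
    set s : Fin k → ℝ := fun ℓ => Real.log (μ0 / z0) - Real.log (μ ℓ / z ℓ) with hsdef
    have hsle : ∀ ℓ, s ℓ ≤ 0 := fun ℓ => by
      have h1 : Real.log (μ0 / z0) ≤ 0 :=
        Real.log_nonpos (by positivity) ((div_le_one hz0pos).mpr hμ0z0)
      have h2 : 0 ≤ Real.log (μ ℓ / z ℓ) :=
        Real.log_nonneg ((one_le_div (hzpos ℓ)).mpr (hzμ ℓ))
      simp only [hsdef]; linarith
    have hexps : ∀ ℓ, Real.exp (s ℓ) = (μ0 * z ℓ) / (z0 * μ ℓ) := fun ℓ => by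
      simp only [hsdef]
      rw [Real.exp_sub, Real.exp_log (div_pos hμ0pos hz0pos), Real.exp_log (div_pos (hμpos ℓ) (hzpos ℓ))]
      field_simp
    set Y : Fin n → Ω → ℝ := fun i ω => Real.exp (∑ ℓ, s ℓ * X i ℓ ω) with hY
    have hYmeas : ∀ i, Measurable (Y i) := fun i =>
      (Finset.measurable_sum _ fun ℓ _ => (hmeas i ℓ).const_mul (s ℓ)).exp
    have hYpos : ∀ i ω, 0 < Y i ω := fun i ω => Real.exp_pos _
    have hYle1 : ∀ i ω, Y i ω ≤ 1 := fun i ω => by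
      simp only [hY]
      rw [← Real.exp_zero]
      apply Real.exp_le_exp.mpr
      apply Finset.sum_nonpos
      intro ℓ _
      have := mul_nonneg (neg_nonneg.mpr (hsle ℓ)) (hnonneg i ℓ ω)
      nlinarith
    have hYint : ∀ i, Integrable (Y i) ℙ := fun i =>
      hbd _ (hYmeas i) (fun ω => (hYpos i ω).le) (hYle1 i)
    -- Jensen step
    have hjensen : ∀ i ω, Y i ω ≤ (1 - ∑ ℓ, X i ℓ ω) + ∑ ℓ, X i ℓ ω * Real.exp (s ℓ) := by
      intro i ω
      set w : Option (Fin k) → ℝ := fun o => Option.elim o (1 - ∑ ℓ, X i ℓ ω) fun ℓ => X i ℓ ω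
        with hw
      set p : Option (Fin k) → ℝ := fun o => Option.elim o 0 s with hp
      have h₀ : ∀ o ∈ Finset.univ, 0 ≤ w o := by
        rintro (_ | ℓ) _
        · simp only [hw, Option.elim]; linarith [hsum i ω]
        · exact hnonneg i ℓ ω
      have h₁ : ∑ o, w o = 1 := by
        rw [Fintype.sum_option]
        simp only [hw, Option.elim]
        ring
      have key := convexOn_exp.map_sum_le h₀ h₁ fun o _ => Set.mem_univ (p o)
      simp only [smul_eq_mul] at key
      rw [Fintype.sum_option, Fintype.sum_option] at key
      simp only [hw, hp, Option.elim, mul_zero, zero_add, Real.exp_zero, mul_one] at key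
      calc Y i ω = Real.exp (∑ ℓ, X i ℓ ω * p (some ℓ)) := by
            simp only [hY, hp, Option.elim]
            congr 1
            exact Finset.sum_congr rfl fun ℓ _ => mul_comm _ _
        _ ≤ (1 - ∑ ℓ, X i ℓ ω) + ∑ ℓ, X i ℓ ω * Real.exp (p (some ℓ)) := key
        _ = (1 - ∑ ℓ, X i ℓ ω) + ∑ ℓ, X i ℓ ω * Real.exp (s ℓ) := rfl
    set a : Fin n → ℝ := fun i => ∫ ω, Y i ω with ha
    have ha0 : ∀ i, 0 ≤ a i := fun i => integral_nonneg fun ω => (hYpos i ω).le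
    have hEY : ∀ i, a i ≤ (1 - ∑ ℓ, m i ℓ) + ∑ ℓ, m i ℓ * Real.exp (s ℓ) := by
      intro i
      have hint1 : Integrable (fun ω => 1 - ∑ ℓ, X i ℓ ω) ℙ :=
        (integrable_const _).sub (integrable_finset_sum _ fun ℓ _ => hXint i ℓ)
      have hint2 : Integrable (fun ω => ∑ ℓ, X i ℓ ω * Real.exp (s ℓ)) ℙ :=
        integrable_finset_sum _ fun ℓ _ => (hXint i ℓ).mul_const _
      have h1 : a i ≤ ∫ ω, ((1 - ∑ ℓ, X i ℓ ω) + ∑ ℓ, X i ℓ ω * Real.exp (s ℓ)) :=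
        integral_mono (hYint i) (hint1.add hint2) (hjensen i)
      have h2 : ∫ ω, ((1 - ∑ ℓ, X i ℓ ω) + ∑ ℓ, X i ℓ ω * Real.exp (s ℓ)) =
          (1 - ∑ ℓ, m i ℓ) + ∑ ℓ, m i ℓ * Real.exp (s ℓ) := by
        rw [integral_add hint1 hint2,
          integral_sub (integrable_const 1) (integrable_finset_sum _ fun ℓ _ => hXint i ℓ),
          integral_const, probReal_univ, one_smul,
          integral_finset_sum _ (fun ℓ _ => hXint i ℓ),
          integral_finset_sum _ (fun ℓ _ => (hXint i ℓ).mul_const _)]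
        congr 1
        exact Finset.sum_congr rfl fun ℓ _ => integral_mul_const _ _
      linarith [h1, h2.le, h2.ge]
    -- sum of expectations bound
    have hSa : ∑ i, a i ≤ (n:ℝ) * (μ0 / z0) := by
      have h1 : ∑ i, a i ≤ ∑ i, ((1 - ∑ ℓ, m i ℓ) + ∑ ℓ, m i ℓ * Real.exp (s ℓ)) :=
        Finset.sum_le_sum fun i _ => hEY i
      have hswap1 : ∑ i, ∑ ℓ, m i ℓ = ∑ ℓ, (n:ℝ) * μ ℓ := by
        rw [Finset.sum_comm]; exact Finset.sum_congr rfl fun ℓ _ => (hμn ℓ).symm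
      have hswap2 : ∑ i, ∑ ℓ, m i ℓ * Real.exp (s ℓ) = ∑ ℓ, ((n:ℝ) * μ ℓ) * Real.exp (s ℓ) := by
        rw [Finset.sum_comm]
        exact Finset.sum_congr rfl fun ℓ _ => by rw [← Finset.sum_mul, ← hμn ℓ]
      rw [Finset.sum_add_distrib, Finset.sum_sub_distrib, Finset.sum_const, hswap1, hswap2] at h1
      have h3 : ∑ ℓ, ((n:ℝ) * μ ℓ) * Real.exp (s ℓ) = (n:ℝ) * (μ0 / z0) * ∑ ℓ, z ℓ := by
        rw [Finset.mul_sum]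
        refine Finset.sum_congr rfl fun ℓ _ => ?_
        rw [hexps ℓ]
        field_simp [(hμpos ℓ).ne', hz0pos.ne']
      rw [h3, hzs, ← Finset.mul_sum] at h1
      have hμs : ∑ ℓ, μ ℓ = 1 - μ0 := by linarith
      rw [hμs] at h1
      simp only [Finset.card_univ, Fintype.card_fin, nsmul_eq_mul, mul_one] at h1
      have heq : (n:ℝ) - (n:ℝ) * (1 - μ0) + (n:ℝ) * (μ0 / z0) * (1 - z0) = (n:ℝ) * (μ0 / z0) := by
        field_simp
        ring
      linarith
    -- AM-GM
    have hprodY : ∏ i, a i ≤ (μ0 / z0) ^ n := by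
      have hgm := Real.geom_mean_le_arith_mean_weighted Finset.univ (fun _ => 1 / (n:ℝ)) a
        (fun i _ => by positivity) (by
          rw [Finset.sum_const, Finset.card_univ, Fintype.card_fin, nsmul_eq_mul]
          field_simp) (fun i _ => ha0 i)
      have h5 : ∑ i, (1 / (n:ℝ)) * a i = (∑ i, a i) / n := by
        rw [← Finset.mul_sum]; ring
      have h6 : (∑ i, a i) / n ≤ μ0 / z0 := by
        rw [div_le_iff₀ hnpos]; linarith [hSa]
      have h7 : ∏ i, a i ^ (1 / (n:ℝ)) ≤ μ0 / z0 := by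
        calc ∏ i, a i ^ (1 / (n:ℝ)) ≤ ∑ i, (1 / (n:ℝ)) * a i := hgm
          _ = (∑ i, a i) / n := h5
          _ ≤ μ0 / z0 := h6
      have h8 : ∏ i, a i = (∏ i, a i ^ (1 / (n:ℝ))) ^ n := by
        rw [← Finset.prod_pow]
        refine Finset.prod_congr rfl fun i _ => ?_
        rw [← Real.rpow_natCast (a i ^ (1 / (n:ℝ))) n, ← Real.rpow_mul (ha0 i), one_div,
          inv_mul_cancel₀ hnpos.ne', Real.rpow_one]
      rw [h8]
      exact pow_le_pow_left₀ (Finset.prod_nonneg fun i _ => Real.rpow_nonneg (ha0 i) _) h7 n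
    -- independence: expectation of product
    have hYindep : iIndepFun Y ℙ := by
      have := hindep.comp (fun _ (v : Fin k → ℝ) => Real.exp (∑ ℓ, s ℓ * v ℓ))
        (fun _ => (Finset.measurable_sum _ fun ℓ _ =>
          by fun_prop).exp)
      exact this
    set T : Ω → ℝ := fun ω => ∏ i, Y i ω with hT
    have hTmeas : Measurable T := by
      have := Finset.measurable_prod Finset.univ fun i (_ : i ∈ Finset.univ) => hYmeas i
      exact this
    have hTnonneg : ∀ ω, 0 ≤ T ω := fun ω => Finset.prod_nonneg fun i _ => (hYpos i ω).le
    have hTint : Integrable T ℙ := hbd _ hTmeas hTnonneg fun ω =>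
      Finset.prod_le_one (fun i _ => (hYpos i ω).le) fun i _ => hYle1 i ω
    have hintT : ∫ ω, T ω = ∏ i, a i := aux_integral_prod hYindep hYmeas Finset.univ
    set c : ℝ := Real.exp (∑ ℓ, s ℓ * ((n:ℝ) * z ℓ)) with hc
    have hcpos : (0:ℝ) < c := Real.exp_pos _
    have hsubset : {ω | ∀ ℓ, (∑ i, X i ℓ ω) / n ≤ z ℓ} ⊆ {ω | c ≤ T ω} := by
      intro ω hω
      simp only [Set.mem_setOf_eq] at hω ⊢
      have hXsum : ∀ ℓ, ∑ i, X i ℓ ω ≤ (n:ℝ) * z ℓ := fun ℓ => by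
        have h1 := hω ℓ; rw [div_le_iff₀ hnpos] at h1; linarith
      have hTeq : T ω = Real.exp (∑ ℓ, s ℓ * ∑ i, X i ℓ ω) := by
        simp only [hT, hY]
        rw [← Real.exp_sum]
        congr 1
        rw [Finset.sum_comm]
        exact Finset.sum_congr rfl fun ℓ _ => (Finset.mul_sum _ _ _).symm
      rw [hTeq, hc]
      apply Real.exp_le_exp.mpr
      exact Finset.sum_le_sum fun ℓ _ => mul_le_mul_of_nonpos_left (hXsum ℓ) (hsle ℓ)
    have hmarkov := mul_meas_ge_le_integral_of_nonneg (μ := ℙ)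
      (Filter.Eventually.of_forall hTnonneg) hTint c
    have h9 : (ℙ {ω | c ≤ T ω}).toReal ≤ (μ0 / z0) ^ n / c := by
      rw [le_div_iff₀ hcpos]
      calc (ℙ {ω | c ≤ T ω}).toReal * c = c * (ℙ {ω | c ≤ T ω}).toReal := mul_comm _ _
        _ ≤ ∫ ω, T ω := hmarkov
        _ = ∏ i, a i := hintT
        _ ≤ (μ0 / z0) ^ n := hprodY
    -- the final algebraic identity
    have hq : (0:ℝ) < μ0 / z0 := by positivity
    have hql : ∀ ℓ, (0:ℝ) < μ ℓ / z ℓ := fun ℓ => by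
      have := hμpos ℓ; have := hzpos ℓ; positivity
    have hkey : (μ0 / z0) ^ n / c =
        (μ0 / z0) ^ ((n:ℝ) * z0) * ∏ ℓ, (μ ℓ / z ℓ) ^ ((n:ℝ) * z ℓ) := by
      have hpow : (μ0 / z0) ^ n = Real.exp ((n:ℝ) * Real.log (μ0 / z0)) := by
        rw [← Real.exp_log (pow_pos hq n), Real.log_pow]
      have hsum_s : ∑ ℓ, s ℓ * ((n:ℝ) * z ℓ) =
          Real.log (μ0 / z0) * ((n:ℝ) * (1 - z0)) - ∑ ℓ, ((n:ℝ) * z ℓ) * Real.log (μ ℓ / z ℓ) := by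
        have h1 : ∑ ℓ, s ℓ * ((n:ℝ) * z ℓ) =
            ∑ ℓ, (Real.log (μ0 / z0) * ((n:ℝ) * z ℓ) - ((n:ℝ) * z ℓ) * Real.log (μ ℓ / z ℓ)) := by
          refine Finset.sum_congr rfl fun ℓ _ => ?_
          simp only [hsdef]; ring
        rw [h1, Finset.sum_sub_distrib]
        congr 1
        rw [← Finset.mul_sum, ← Finset.mul_sum, hzs]
      calc (μ0 / z0) ^ n / c
          = Real.exp ((n:ℝ) * Real.log (μ0 / z0) - ∑ ℓ, s ℓ * ((n:ℝ) * z ℓ)) := by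
            rw [hpow, hc, ← Real.exp_sub]
        _ = Real.exp (((n:ℝ) * z0) * Real.log (μ0 / z0) +
              ∑ ℓ, ((n:ℝ) * z ℓ) * Real.log (μ ℓ / z ℓ)) := by
            rw [hsum_s]; congr 1; ring
        _ = (μ0 / z0) ^ ((n:ℝ) * z0) * ∏ ℓ, (μ ℓ / z ℓ) ^ ((n:ℝ) * z ℓ) := by
            rw [Real.exp_add, Real.exp_sum]
            congr 1
            · rw [Real.rpow_def_of_pos hq]; congr 1; ring
            · exact Finset.prod_congr rfl fun ℓ _ => by
                rw [Real.rpow_def_of_pos (hql ℓ)]; congr 1; ring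
    calc ℙ {ω | ∀ ℓ, (∑ i, X i ℓ ω) / n ≤ z ℓ} ≤ ℙ {ω | c ≤ T ω} := measure_mono hsubset
      _ = ENNReal.ofReal ((ℙ {ω | c ≤ T ω}).toReal) :=
          (ENNReal.ofReal_toReal (measure_ne_top _ _)).symm
      _ ≤ ENNReal.ofReal ((μ0 / z0) ^ n / c) := ENNReal.ofReal_le_ofReal h9
      _ = ENNReal.ofReal ((μ0 / z0) ^ ((n:ℝ) * z0) * ∏ ℓ, (μ ℓ / z ℓ) ^ ((n:ℝ) * z ℓ)) := by
          rw [hkey]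
end

section
/- Let X_1, ..., X_n be independent random vectors of dimension k, where X_i = (X_{1,i}, ..., X_{k,i}), such that for every i, X_{ℓ,i} ≥ 0 for all ℓ = 1, ..., k and Σ_{ℓ=1}^k X_{ℓ,i} ≤ 1. Let X̄_n = (1/n) Σ_{i=1}^n X_i, let μ_ℓ = (1/n) Σ_{i=1}^n E[X_{ℓ,i}] for ℓ = 1, ..., k, and set μ_0 = 1 − Σ_{ℓ=1}^k μ_ℓ. Let z_0, z_1, ..., z_k be positive real numbers with Σ_{ℓ=0}^k z_ℓ = 1, and suppose z_ℓ ≥ μ_ℓ for all ℓ = 1, ..., k. Then Pr{X̄_n ≥ z componentwise} ≤ ∏_{ℓ=0}^k (μ_ℓ / z_ℓ)^{n z_ℓ}, where z = (z_1, ..., z_k). -/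
open MeasureTheory ProbabilityTheory Finset

lemma exp_sum_le_aux {k : ℕ} (x lam : Fin k → ℝ) (hx : ∀ ℓ, 0 ≤ x ℓ) (hs : ∑ ℓ, x ℓ ≤ 1) :
    Real.exp (∑ ℓ, lam ℓ * x ℓ) ≤ (1 - ∑ ℓ, x ℓ) + ∑ ℓ, x ℓ * Real.exp (lam ℓ) := by
  have h := convexOn_exp.map_sum_le (t := (Finset.univ : Finset (Fin (k+1))))
      (w := Fin.cons (1 - ∑ ℓ, x ℓ) x) (p := Fin.cons 0 lam)
      (fun i _ => by
        refine Fin.cases ?_ ?_ i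
        · simpa using by linarith
        · intro j; simpa using hx j)
      (by simp [Fin.sum_univ_succ])
      (fun i _ => Set.mem_univ _)
  simpa [Fin.sum_univ_succ, smul_eq_mul, mul_comm] using h

/-- Concentration inequality for independent random vectors bounded in the simplex
(upper-tail version): if `μ ≤ z` componentwise, then
`Pr{X̄ₙ ≥ z} ≤ ∏_{ℓ=0}^k (μ_ℓ / z_ℓ)^(n z_ℓ)`. -/
theorem concentration_ge
    {Ω : Type*} [MeasureSpace Ω] [IsProbabilityMeasure (ℙ : Measure Ω)]
    (n k : ℕ) (hn : 0 < n)
    (X : Fin n → Fin k → Ω → ℝ)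
    (hmeas : ∀ i ℓ, Measurable (X i ℓ))
    (hindep : iIndepFun
      (fun i => fun ω ℓ => X i ℓ ω) ℙ)
    (hnonneg : ∀ i ℓ ω, 0 ≤ X i ℓ ω)
    (hsum : ∀ i ω, ∑ ℓ, X i ℓ ω ≤ 1)
    (μ : Fin k → ℝ) (hμ : ∀ ℓ, μ ℓ = (∑ i, ∫ ω, X i ℓ ω) / n)
    (μ0 : ℝ) (hμ0 : μ0 = 1 - ∑ ℓ, μ ℓ)
    (z : Fin k → ℝ) (z0 : ℝ)
    (hz0pos : 0 < z0) (hzpos : ∀ ℓ, 0 < z ℓ)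
    (hzsum : z0 + ∑ ℓ, z ℓ = 1)
    (hzμ : ∀ ℓ, μ ℓ ≤ z ℓ) :
    ℙ {ω | ∀ ℓ, z ℓ ≤ (∑ i, X i ℓ ω) / n} ≤
      ENNReal.ofReal ((μ0 / z0) ^ ((n : ℝ) * z0) *
        ∏ ℓ, (μ ℓ / z ℓ) ^ ((n : ℝ) * z ℓ)) := by
  have hnR : (0:ℝ) < n := Nat.cast_pos.mpr hn
  have hXle1 : ∀ i ℓ ω, X i ℓ ω ≤ 1 := fun i ℓ ω =>
    le_trans (Finset.single_le_sum (fun ℓ' _ => hnonneg i ℓ' ω) (mem_univ ℓ)) (hsum i ω)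
  have hXint : ∀ i ℓ, Integrable (X i ℓ) := fun i ℓ =>
    (integrable_const (1:ℝ)).mono' (hmeas i ℓ).aestronglyMeasurable
      (Filter.Eventually.of_forall fun ω => by
        rw [Real.norm_eq_abs, abs_of_nonneg (hnonneg i ℓ ω)]; exact hXle1 i ℓ ω)
  have hEXnn : ∀ i ℓ, 0 ≤ ∫ ω, X i ℓ ω := fun i ℓ => integral_nonneg (fun ω => hnonneg i ℓ ω)
  have hμnonneg : ∀ ℓ, 0 ≤ μ ℓ := fun ℓ => by
    rw [hμ ℓ]
    exact div_nonneg (Finset.sum_nonneg fun i _ => hEXnn i ℓ) hnR.le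
  by_cases hexists : ∃ ℓ, μ ℓ = 0
  · -- degenerate case: the event is null
    obtain ⟨ℓ₀, hℓ₀⟩ := hexists
    have hsum0 : ∑ i, ∫ ω, X i ℓ₀ ω = 0 := by
      have h := (hμ ℓ₀).symm.trans hℓ₀
      field_simp at h
      rw [mul_zero] at h
      exact h
    have hzero : ∀ i, ∫ ω, X i ℓ₀ ω = 0 := fun i =>
      (Finset.sum_eq_zero_iff_of_nonneg (fun i _ => hEXnn i ℓ₀)).mp hsum0 i (mem_univ i)
    have hae : ∀ᵐ ω ∂(ℙ : Measure Ω), ∀ i, X i ℓ₀ ω = 0 := by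
      rw [MeasureTheory.ae_all_iff]
      intro i
      have := (integral_eq_zero_iff_of_nonneg (fun ω => hnonneg i ℓ₀ ω) (hXint i ℓ₀)).mp (hzero i)
      filter_upwards [this] with ω hω using hω
    have hnull : ℙ {ω | ∀ ℓ, z ℓ ≤ (∑ i, X i ℓ ω) / n} = 0 := by
      rw [measure_eq_zero_iff_ae_notMem]
      filter_upwards [hae] with ω hω hmem
      have h1 := hmem ℓ₀
      have h2 : ∑ i, X i ℓ₀ ω = 0 := Finset.sum_eq_zero (fun i _ => hω i)
      rw [h2] at h1
      simp only [zero_div] at h1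
      exact absurd h1 (not_le.mpr (hzpos ℓ₀))
    rw [hnull]
    exact zero_le
  · push_neg at hexists
    have hμpos : ∀ ℓ, 0 < μ ℓ := fun ℓ => (hμnonneg ℓ).lt_of_ne (Ne.symm (hexists ℓ))
    have hμ0ge : z0 ≤ μ0 := by
      have : ∑ ℓ, μ ℓ ≤ ∑ ℓ, z ℓ := Finset.sum_le_sum fun ℓ _ => hzμ ℓ
      rw [hμ0]; linarith
    have hμ0pos : 0 < μ0 := lt_of_lt_of_le hz0pos hμ0ge
    set A : ℝ := Real.log (μ0 / z0) with hA
    set B : Fin k → ℝ := fun ℓ => Real.log (μ ℓ / z ℓ) with hB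
    set lam : Fin k → ℝ := fun ℓ => A - B ℓ with hlam
    have hlamnn : ∀ ℓ, 0 ≤ lam ℓ := fun ℓ => by
      have h1 : 0 ≤ A := Real.log_nonneg ((one_le_div hz0pos).mpr hμ0ge)
      have h2 : B ℓ ≤ 0 := Real.log_nonpos (div_nonneg (hμnonneg ℓ) (hzpos ℓ).le)
        ((div_le_one (hzpos ℓ)).mpr (hzμ ℓ))
      simp only [hlam]; linarith
    have hexplam : ∀ ℓ, Real.exp (lam ℓ) = (μ0 / z0) * (z ℓ / μ ℓ) := fun ℓ => by
      rw [hlam]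
      simp only [Real.exp_sub, hA, hB,
        Real.exp_log (div_pos hμ0pos hz0pos), Real.exp_log (div_pos (hμpos ℓ) (hzpos ℓ))]
      have h1 : μ ℓ ≠ 0 := (hμpos ℓ).ne'
      have h2 : z ℓ ≠ 0 := (hzpos ℓ).ne'
      have h3 : z0 ≠ 0 := hz0pos.ne'
      field_simp
    set Y : Fin n → Ω → ℝ := fun i ω => ∑ ℓ, lam ℓ * X i ℓ ω with hY
    have hYmeas : ∀ i, Measurable (Y i) := fun i =>
      Finset.measurable_sum _ fun ℓ _ => (hmeas i ℓ).const_mul _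
    have hYnn : ∀ i ω, 0 ≤ Y i ω := fun i ω =>
      Finset.sum_nonneg fun ℓ _ => mul_nonneg (hlamnn ℓ) (hnonneg i ℓ ω)
    have hYle : ∀ i ω, Y i ω ≤ ∑ ℓ, lam ℓ := fun i ω =>
      Finset.sum_le_sum fun ℓ _ => by
        have := hXle1 i ℓ ω
        nlinarith [hlamnn ℓ, hnonneg i ℓ ω]
    have hindepY : iIndepFun Y ℙ := by
      have := hindep.comp (g := fun (_ : Fin n) (v : Fin k → ℝ) => ∑ ℓ, lam ℓ * v ℓ)
        (fun i => Finset.measurable_sum _ fun ℓ _ => (measurable_pi_apply ℓ).const_mul _)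
      exact this
    set S : Ω → ℝ := ∑ i, Y i with hS
    set ε : ℝ := (n : ℝ) * ∑ ℓ, lam ℓ * z ℓ with hε
    -- event inclusion
    have hsub : {ω | ∀ ℓ, z ℓ ≤ (∑ i, X i ℓ ω) / n} ⊆ {ω | ε ≤ S ω} := by
      intro ω hω
      simp only [Set.mem_setOf_eq] at hω ⊢
      have h1 : ∀ ℓ, (n : ℝ) * z ℓ ≤ ∑ i, X i ℓ ω := fun ℓ => by
        have := hω ℓ
        rw [le_div_iff₀ hnR] at this
        linarith
      have h2 : ε ≤ ∑ ℓ, lam ℓ * ∑ i, X i ℓ ω := by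
        rw [hε, Finset.mul_sum]
        refine Finset.sum_le_sum fun ℓ _ => ?_
        calc (n:ℝ) * (lam ℓ * z ℓ) = lam ℓ * ((n:ℝ) * z ℓ) := by ring
        _ ≤ lam ℓ * ∑ i, X i ℓ ω := mul_le_mul_of_nonneg_left (h1 ℓ) (hlamnn ℓ)
      have h3 : ∑ ℓ, lam ℓ * ∑ i, X i ℓ ω = S ω := by
        rw [hS, Finset.sum_apply]
        simp only [hY, Finset.mul_sum]
        exact Finset.sum_comm
      linarith [h2, h3.le]
    -- integrability of exp(1 * S)
    have hSmeas : Measurable S := by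
      have hSe : S = fun ω => ∑ i, Y i ω := by ext ω; rw [hS, Finset.sum_apply]
      rw [hSe]; exact Finset.measurable_sum _ fun i _ => hYmeas i
    have hintS : Integrable (fun ω => Real.exp (1 * S ω)) := by
      refine (integrable_const (Real.exp ((n:ℝ) * ∑ ℓ, lam ℓ))).mono'
        ((hSmeas.const_mul 1).exp.aestronglyMeasurable) ?_
      refine Filter.Eventually.of_forall fun ω => ?_
      rw [Real.norm_eq_abs, abs_of_pos (Real.exp_pos _), Real.exp_le_exp, one_mul]
      calc S ω = ∑ i, Y i ω := by rw [hS, Finset.sum_apply]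
      _ ≤ ∑ _i : Fin n, ∑ ℓ, lam ℓ := Finset.sum_le_sum fun i _ => hYle i _
      _ = (n:ℝ) * ∑ ℓ, lam ℓ := by simp [Finset.sum_const, nsmul_eq_mul]
    have hchern := measure_ge_le_exp_mul_mgf (μ := (ℙ : Measure Ω)) (X := S) (t := 1)
      ε zero_le_one hintS
    -- per-summand bound
    set a : Fin n → ℝ := fun i => 1 - (∑ ℓ, ∫ ω, X i ℓ ω) + ∑ ℓ, (∫ ω, X i ℓ ω) * Real.exp (lam ℓ)
      with ha
    have hmgf_le : ∀ i, mgf (Y i) ℙ 1 ≤ a i := by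
      intro i
      rw [mgf]
      have hpt : ∀ ω, Real.exp (1 * Y i ω) ≤
          (1 - ∑ ℓ, X i ℓ ω) + ∑ ℓ, X i ℓ ω * Real.exp (lam ℓ) := fun ω => by
        rw [one_mul]
        exact exp_sum_le_aux (fun ℓ => X i ℓ ω) lam (fun ℓ => hnonneg i ℓ ω) (hsum i ω)
      have hint1 : Integrable (fun ω => Real.exp (1 * Y i ω)) := by
        refine (integrable_const (Real.exp (∑ ℓ, lam ℓ))).mono'
          (((hYmeas i).const_mul 1).exp.aestronglyMeasurable) ?_
        refine Filter.Eventually.of_forall fun ω => ?_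
        rw [Real.norm_eq_abs, abs_of_pos (Real.exp_pos _), Real.exp_le_exp, one_mul]
        exact hYle i ω
      have hint2 : Integrable (fun ω => (1 - ∑ ℓ, X i ℓ ω) + ∑ ℓ, X i ℓ ω * Real.exp (lam ℓ)) := by
        apply Integrable.add
        · exact (integrable_const (1:ℝ)).sub (integrable_finset_sum _ fun ℓ _ => hXint i ℓ)
        · exact integrable_finset_sum _ fun ℓ _ => (hXint i ℓ).mul_const _
      calc ∫ ω, Real.exp (1 * Y i ω) ≤
          ∫ ω, ((1 - ∑ ℓ, X i ℓ ω) + ∑ ℓ, X i ℓ ω * Real.exp (lam ℓ)) :=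
        integral_mono hint1 hint2 hpt
      _ = a i := by
        have hf : Integrable (fun ω => 1 - ∑ ℓ, X i ℓ ω) (ℙ : Measure Ω) :=
          (integrable_const (1:ℝ)).sub (integrable_finset_sum _ fun ℓ _ => hXint i ℓ)
        have hg : Integrable (fun ω => ∑ ℓ, X i ℓ ω * Real.exp (lam ℓ)) (ℙ : Measure Ω) :=
          integrable_finset_sum _ fun ℓ _ => (hXint i ℓ).mul_const _
        have e0 : (∫ ω, ((1 - ∑ ℓ, X i ℓ ω) + ∑ ℓ, X i ℓ ω * Real.exp (lam ℓ))) =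
            (∫ ω, (1 - ∑ ℓ, X i ℓ ω)) + ∫ ω, ∑ ℓ, X i ℓ ω * Real.exp (lam ℓ) :=
          integral_add hf hg
        have e1 : (∫ ω, (1 - ∑ ℓ, X i ℓ ω)) = 1 - ∑ ℓ, ∫ ω, X i ℓ ω := by
          rw [integral_sub (integrable_const (1:ℝ)) (integrable_finset_sum _
            fun ℓ _ => hXint i ℓ), integral_finset_sum _ (fun ℓ _ => hXint i ℓ)]
          simp
        have e2 : (∫ ω, ∑ ℓ, X i ℓ ω * Real.exp (lam ℓ)) =
            ∑ ℓ, (∫ ω, X i ℓ ω) * Real.exp (lam ℓ) := by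
          rw [integral_finset_sum _ (fun ℓ _ => (hXint i ℓ).mul_const _)]
          exact Finset.sum_congr rfl fun ℓ _ => integral_mul_const _ _
        rw [e0, e1, e2, ha]
    have hann : ∀ i, 0 ≤ a i := fun i => le_trans mgf_nonneg (hmgf_le i)
    -- AM-GM
    set c : ℝ := μ0 + ∑ ℓ, μ ℓ * Real.exp (lam ℓ) with hc
    have hsa : ∑ i, a i = (n:ℝ) * c := by
      have hm : ∀ ℓ, ∑ i, ∫ ω, X i ℓ ω = (n:ℝ) * μ ℓ := fun ℓ => by
        rw [hμ ℓ]; field_simp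
      have e1 : ∑ i : Fin n, ∑ ℓ, ∫ ω, X i ℓ ω = (n:ℝ) * ∑ ℓ, μ ℓ := by
        rw [Finset.sum_comm, Finset.sum_congr rfl fun ℓ _ => hm ℓ, ← Finset.mul_sum]
      have e2 : ∑ i : Fin n, ∑ ℓ, (∫ ω, X i ℓ ω) * Real.exp (lam ℓ) =
          (n:ℝ) * ∑ ℓ, μ ℓ * Real.exp (lam ℓ) := by
        rw [Finset.sum_comm, Finset.mul_sum]
        refine Finset.sum_congr rfl fun ℓ _ => ?_
        rw [← Finset.sum_mul, hm ℓ]; ring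
      simp only [ha, Finset.sum_add_distrib, Finset.sum_sub_distrib, Finset.sum_const,
        card_univ, Fintype.card_fin, nsmul_eq_mul, mul_one, e1, e2, hc, hμ0]
      ring
    have hprod_le : ∏ i, a i ≤ c ^ n := by
      have hgm := Real.geom_mean_le_arith_mean_weighted Finset.univ
        (fun _ : Fin n => (n:ℝ)⁻¹) a (fun i _ => by positivity)
        (by simp [Finset.sum_const, nsmul_eq_mul]; field_simp) (fun i _ => hann i)
      have h1 : ∏ i, a i ^ ((n:ℝ)⁻¹) = (∏ i, a i) ^ ((n:ℝ)⁻¹) :=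
        Real.finset_prod_rpow _ _ (fun i _ => hann i) _
      have h2 : ∑ i, (n:ℝ)⁻¹ * a i = c := by
        rw [← Finset.mul_sum, hsa]; field_simp
      rw [h1, h2] at hgm
      calc ∏ i, a i = ((∏ i, a i) ^ ((n:ℝ)⁻¹)) ^ n :=
        (Real.rpow_inv_natCast_pow (Finset.prod_nonneg fun i _ => hann i) hn.ne').symm
      _ ≤ c ^ n := pow_le_pow_left₀ (Real.rpow_nonneg (Finset.prod_nonneg fun i _ => hann i) _) hgm n
    have hceq : c = μ0 / z0 := by
      have : ∀ ℓ, μ ℓ * Real.exp (lam ℓ) = (μ0 / z0) * z ℓ := fun ℓ => by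
        have h1 : μ ℓ ≠ 0 := (hμpos ℓ).ne'
        have h2 : z0 ≠ 0 := hz0pos.ne'
        rw [hexplam ℓ]
        field_simp
      rw [hc, Finset.sum_congr rfl (fun ℓ _ => this ℓ), ← Finset.mul_sum]
      have hz : ∑ ℓ, z ℓ = 1 - z0 := by linarith
      rw [hz]
      have h2 : z0 ≠ 0 := hz0pos.ne'
      field_simp
      ring
    -- combine
    have hmgfprod : mgf S ℙ 1 = ∏ i, mgf (Y i) ℙ 1 := hindepY.mgf_sum hYmeas Finset.univ
    have hfinal : (ℙ {ω | ∀ ℓ, z ℓ ≤ (∑ i, X i ℓ ω) / n}).toReal ≤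
        Real.exp (-1 * ε) * (μ0/z0) ^ n := by
      calc (ℙ {ω | ∀ ℓ, z ℓ ≤ (∑ i, X i ℓ ω) / n}).toReal
          ≤ (ℙ {ω | ε ≤ S ω}).toReal := by
            apply ENNReal.toReal_mono (measure_ne_top _ _) (measure_mono hsub)
      _ ≤ Real.exp (-1 * ε) * mgf S ℙ 1 := hchern
      _ ≤ Real.exp (-1 * ε) * (μ0/z0) ^ n := by
          rw [hmgfprod, ← hceq]
          apply mul_le_mul_of_nonneg_left _ (Real.exp_pos _).le
          exact le_trans (Finset.prod_le_prod (fun i _ => mgf_nonneg) (fun i _ => hmgf_le i))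
            hprod_le
    -- identify the RHS
    have hRHS : Real.exp (-1 * ε) * (μ0/z0) ^ n =
        (μ0 / z0) ^ ((n : ℝ) * z0) * ∏ ℓ, (μ ℓ / z ℓ) ^ ((n : ℝ) * z ℓ) := by
      have h0 : (μ0 / z0 : ℝ) ^ ((n : ℝ) * z0) = Real.exp (A * ((n:ℝ) * z0)) := by
        rw [hA, Real.rpow_def_of_pos (div_pos hμ0pos hz0pos)]
      have hl : ∀ ℓ, (μ ℓ / z ℓ : ℝ) ^ ((n : ℝ) * z ℓ) = Real.exp (B ℓ * ((n:ℝ) * z ℓ)) :=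
        fun ℓ => by rw [hB, Real.rpow_def_of_pos (div_pos (hμpos ℓ) (hzpos ℓ))]
      have hpow : (μ0/z0 : ℝ) ^ n = Real.exp ((n:ℝ) * A) := by
        rw [hA, Real.exp_nat_mul, Real.exp_log (div_pos hμ0pos hz0pos)]
      rw [h0, hpow, Finset.prod_congr rfl fun ℓ _ => hl ℓ, ← Real.exp_sum,
        ← Real.exp_add, ← Real.exp_add]
      congr 1
      rw [hε]
      have e3 : ∑ ℓ, lam ℓ * z ℓ = A * (1 - z0) - ∑ ℓ, B ℓ * z ℓ := by
        have hzz : ∑ ℓ, z ℓ = 1 - z0 := by linarith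
        simp only [hlam, sub_mul]
        rw [Finset.sum_sub_distrib, ← Finset.mul_sum, hzz]
      have e4 : ∑ ℓ, B ℓ * ((n:ℝ) * z ℓ) = (n:ℝ) * ∑ ℓ, B ℓ * z ℓ := by
        rw [Finset.mul_sum]; exact Finset.sum_congr rfl fun ℓ _ => by ring
      rw [e3, e4]; ring
    rw [← hRHS]
    rw [ENNReal.le_ofReal_iff_toReal_le (measure_ne_top _ _) (by positivity)]
    exact hfinal
end

section
/- Let α_0, α_1, ..., α_k be positive reals and let μ_i = α_i / Σ_{ℓ=0}^k α_ℓ for i = 0, 1, ..., k. Let X_1, ..., X_n be independent identically distributed random vectors of dimension k, each taking values in the probability simplex {x ∈ R^k : x_ℓ ≥ 0, Σ_{ℓ=1}^k x_ℓ ≤ 1} and satisfying E[X_{ℓ,i}] = μ_ℓ for ℓ = 1, ..., k (as holds when (X_{0,i}, X_{1,i}, ..., X_{k,i}) is Dirichlet distributed with parameter (α_0, ..., α_k)). Let X̄_n = (1/n) Σ_{i=1}^n X_i. Let z_0, z_1, ..., z_k be positive reals with Σ_{ℓ=0}^k z_ℓ = 1, and suppose z_ℓ ≤ μ_ℓ for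 all ℓ = 1, ..., k. Then Pr{X̄_n ≤ z componentwise} ≤ [∏_{i=0}^k (μ_i / z_i)^{z_i}]^n, where z = (z_1, ..., z_k). -/
open MeasureTheory ProbabilityTheory Finset

/-- Concentration inequality (lower tail) for i.i.d. random vectors in the simplex
whose coordinate means are `μ i = α i / ∑ α` (as for the Dirichlet distribution
with parameter `α`): if `z ≤ μ` componentwise, then
`Pr{X̄ₙ ≤ z} ≤ (∏_{i=0}^k (μ i / z i)^(z i))^n`. -/
theorem dirichlet_concentration_le
    {Ω : Type*} [MeasureSpace Ω] [IsProbabilityMeasure (ℙ : Measure Ω)]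
    (n k : ℕ) (hn : 0 < n)
    (α : Fin (k + 1) → ℝ) (hα : ∀ i, 0 < α i)
    (μ : Fin (k + 1) → ℝ) (hμ : ∀ i, μ i = α i / ∑ l, α l)
    (X : Fin n → Ω → Fin k → ℝ)
    (hmeas : ∀ i, Measurable (X i))
    (hindep : iIndepFun X ℙ)
    (hident : ∀ i j, IdentDistrib (X i) (X j) ℙ ℙ)
    (hnonneg : ∀ i ℓ ω, 0 ≤ X i ω ℓ)
    (hsimplex : ∀ i ω, ∑ ℓ, X i ω ℓ ≤ 1)
    (hmean : ∀ (i : Fin n) (ℓ : Fin k), ∫ ω, X i ω ℓ = μ ℓ.succ)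
    (z : Fin (k + 1) → ℝ) (hzpos : ∀ i, 0 < z i) (hzsum : ∑ i, z i = 1)
    (hzμ : ∀ ℓ : Fin k, z ℓ.succ ≤ μ ℓ.succ) :
    ℙ {ω | ∀ ℓ : Fin k, (∑ i, X i ω ℓ) / n ≤ z ℓ.succ} ≤
      ENNReal.ofReal ((∏ i, (μ i / z i) ^ (z i)) ^ n) := by
  classical
  have hA : 0 < ∑ l, α l := Finset.sum_pos (fun i _ => hα i) ⟨0, mem_univ 0⟩
  have hμpos : ∀ i, 0 < μ i := fun i => by rw [hμ]; exact div_pos (hα i) hA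
  have hμsum : ∑ i, μ i = 1 := by
    simp_rw [hμ, ← Finset.sum_div]; exact div_self hA.ne'
  have hμ0z0 : μ 0 ≤ z 0 := by
    have h1 := hzsum; have h2 := hμsum
    rw [Fin.sum_univ_succ] at h1 h2
    have h3 : ∑ ℓ : Fin k, z ℓ.succ ≤ ∑ ℓ : Fin k, μ ℓ.succ :=
      Finset.sum_le_sum fun ℓ _ => hzμ ℓ
    linarith
  have hsz : ∑ ℓ : Fin k, z ℓ.succ = 1 - z 0 := by
    have h1 := hzsum; rw [Fin.sum_univ_succ] at h1; linarith
  have hsμ : ∑ ℓ : Fin k, μ ℓ.succ = 1 - μ 0 := by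
    have h1 := hμsum; rw [Fin.sum_univ_succ] at h1; linarith
  set c : Fin (k+1) → ℝ := fun i => z i * μ 0 / (μ i * z 0) with hc
  have hcpos : ∀ i, 0 < c i := fun i =>
    div_pos (mul_pos (hzpos i) (hμpos 0)) (mul_pos (hμpos i) (hzpos 0))
  have hc0 : c 0 = 1 := by
    rw [hc]; simp only []
    rw [mul_comm (μ 0) (z 0)]
    exact div_self (mul_pos (hzpos 0) (hμpos 0)).ne'
  have hcle : ∀ ℓ : Fin k, c ℓ.succ ≤ 1 := by
    intro ℓ
    rw [hc]
    exact (div_le_one (mul_pos (hμpos _) (hzpos 0))).2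
      (mul_le_mul (hzμ ℓ) hμ0z0 (hμpos 0).le (hμpos _).le)
  have hlam : ∀ ℓ : Fin k, 0 ≤ -Real.log (c ℓ.succ) := fun ℓ =>
    neg_nonneg.2 (Real.log_nonpos (hcpos _).le (hcle ℓ))
  set g : (Fin k → ℝ) → ℝ := fun v => ∑ ℓ, (-Real.log (c ℓ.succ)) * v ℓ with hgdef
  have hg : Measurable g :=
    Finset.univ.measurable_sum fun ℓ _ => (measurable_pi_apply ℓ).const_mul _
  set Y : Fin n → Ω → ℝ := fun i => g ∘ X i with hYdef
  have hYmeas : ∀ i, Measurable (Y i) := fun i => hg.comp (hmeas i)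
  have hYindep : iIndepFun Y ℙ :=
    hindep.comp (fun _ => g) (fun _ => hg)
  have hYnonneg : ∀ i ω, 0 ≤ Y i ω := fun i ω =>
    Finset.sum_nonneg fun ℓ _ => mul_nonneg (hlam ℓ) (hnonneg i ℓ ω)
  -- pointwise AM-GM bound
  have key : ∀ v : Fin k → ℝ, (∀ ℓ, 0 ≤ v ℓ) → ∑ ℓ, v ℓ ≤ 1 →
      Real.exp (-1 * g v) ≤ 1 + ∑ ℓ : Fin k, (c ℓ.succ - 1) * v ℓ := by
    intro v hv hv1
    have hw : ∀ i ∈ Finset.univ, 0 ≤ (Fin.cons (1 - ∑ ℓ, v ℓ) v : Fin (k+1) → ℝ) i := by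
      intro i _
      refine Fin.cases ?_ ?_ i
      · simpa using sub_nonneg.2 hv1
      · intro ℓ; simpa using hv ℓ
    have hw1 : ∑ i, (Fin.cons (1 - ∑ ℓ, v ℓ) v : Fin (k+1) → ℝ) i = 1 := by
      rw [Fin.sum_univ_succ]; simp
    have hAMGM := Real.geom_mean_le_arith_mean_weighted Finset.univ
      ((Fin.cons (1 - ∑ ℓ, v ℓ) v : Fin (k+1) → ℝ)) c hw hw1 (fun i _ => (hcpos i).le)
    have hL : ∏ i, c i ^ ((Fin.cons (1 - ∑ ℓ, v ℓ) v : Fin (k+1) → ℝ) i) = Real.exp (-1 * g v) := by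
      rw [Fin.prod_univ_succ]
      simp only [Fin.cons_zero, Fin.cons_succ, hc0, Real.one_rpow, one_mul]
      rw [hgdef]
      simp only [neg_one_mul, neg_neg]
      rw [← Finset.sum_neg_distrib]
      simp only [neg_mul, neg_neg]
      rw [Real.exp_sum]
      exact Finset.prod_congr rfl fun ℓ _ => Real.rpow_def_of_pos (hcpos _) _
    have hR : ∑ i, (Fin.cons (1 - ∑ ℓ, v ℓ) v : Fin (k+1) → ℝ) i * c i = 1 + ∑ ℓ : Fin k, (c ℓ.succ - 1) * v ℓ := by
      rw [Fin.sum_univ_succ]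
      simp only [Fin.cons_zero, Fin.cons_succ, hc0, mul_one]
      simp only [sub_one_mul]
      rw [Finset.sum_sub_distrib]
      have : ∀ ℓ : Fin k, v ℓ * c ℓ.succ = c ℓ.succ * v ℓ := fun ℓ => mul_comm _ _
      simp_rw [this]
      ring
    rw [hL, hR] at hAMGM
    exact hAMGM
  -- integrability
  have hXint : ∀ i ℓ, Integrable (fun ω => X i ω ℓ) ℙ := by
    intro i ℓ
    refine (integrable_const (1:ℝ)).mono'
      ((measurable_pi_apply ℓ).comp (hmeas i)).aestronglyMeasurable
      (ae_of_all _ fun ω => ?_)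
    rw [Real.norm_eq_abs, abs_of_nonneg (hnonneg i ℓ ω)]
    exact le_trans (Finset.single_le_sum (fun j _ => hnonneg i j ω) (mem_univ ℓ))
      (hsimplex i ω)
  have hexpint : ∀ i, Integrable (fun ω => Real.exp (-1 * Y i ω)) ℙ := by
    intro i
    refine (integrable_const (1:ℝ)).mono'
      (((hYmeas i).const_mul (-1)).exp.aestronglyMeasurable)
      (ae_of_all _ fun ω => ?_)
    rw [Real.norm_eq_abs, abs_of_pos (Real.exp_pos _)]
    exact Real.exp_le_one_iff.2 (by nlinarith [hYnonneg i ω])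
  -- per-variable mgf bound
  have hmgfle : ∀ i, mgf (Y i) ℙ (-1) ≤ μ 0 / z 0 := by
    intro i
    have hint2 : Integrable (fun ω => 1 + ∑ ℓ : Fin k, (c ℓ.succ - 1) * X i ω ℓ) ℙ :=
      (integrable_const 1).add (integrable_finset_sum _ fun ℓ _ => (hXint i ℓ).const_mul _)
    have hle : mgf (Y i) ℙ (-1) ≤ ∫ ω, (1 + ∑ ℓ : Fin k, (c ℓ.succ - 1) * X i ω ℓ) := by
      refine integral_mono (hexpint i) hint2 fun ω => ?_
      exact key (X i ω) (fun ℓ => hnonneg i ℓ ω) (hsimplex i ω)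
    have hcalc : ∫ ω, (1 + ∑ ℓ : Fin k, (c ℓ.succ - 1) * X i ω ℓ) =
        1 + ∑ ℓ : Fin k, (c ℓ.succ - 1) * μ ℓ.succ := by
      rw [integral_add (integrable_const 1)
        (integrable_finset_sum _ fun ℓ _ => (hXint i ℓ).const_mul _)]
      rw [integral_const]
      simp only [measure_univ, probReal_univ, ENNReal.toReal_one, smul_eq_mul, mul_one, one_smul]
      rw [integral_finset_sum _ fun ℓ _ => (hXint i ℓ).const_mul _]
      congr 1
      refine Finset.sum_congr rfl fun ℓ _ => ?_
      rw [integral_const_mul, hmean i ℓ]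
    have harith : 1 + ∑ ℓ : Fin k, (c ℓ.succ - 1) * μ ℓ.succ = μ 0 / z 0 := by
      have hterm : ∀ ℓ : Fin k, (c ℓ.succ - 1) * μ ℓ.succ =
          (μ 0 / z 0) * z ℓ.succ - μ ℓ.succ := by
        intro ℓ
        have h1 : μ ℓ.succ ≠ 0 := (hμpos _).ne'
        have h2 : z 0 ≠ 0 := (hzpos 0).ne'
        rw [hc]
        field_simp
      simp_rw [hterm]
      have h2 : z 0 ≠ 0 := (hzpos 0).ne'
      rw [Finset.sum_sub_distrib, ← Finset.mul_sum, hsz, hsμ]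
      field_simp
      ring
    rw [hcalc, harith] at hle
    exact hle
  -- Chernoff
  set ε : ℝ := (n : ℝ) * ∑ ℓ : Fin k, (-Real.log (c ℓ.succ)) * z ℓ.succ with hε
  set S : Ω → ℝ := ∑ i, Y i with hS
  have hSint : Integrable (fun ω => Real.exp (-1 * S ω)) ℙ :=
    hYindep.integrable_exp_mul_sum hYmeas fun i _ => hexpint i
  have hchern := measure_le_le_exp_mul_mgf (μ := ℙ) (X := S) ε
    (by norm_num : (-1:ℝ) ≤ 0) hSint
  have hsub : {ω | ∀ ℓ : Fin k, (∑ i, X i ω ℓ) / n ≤ z ℓ.succ} ⊆ {ω | S ω ≤ ε} := by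
    intro ω hω
    have hb : ∀ ℓ, ∑ i, X i ω ℓ ≤ (n : ℝ) * z ℓ.succ := by
      intro ℓ
      have h := hω ℓ
      rw [div_le_iff₀ (by exact_mod_cast hn : (0:ℝ) < n)] at h
      linarith [h]
    have hSω : S ω = ∑ ℓ : Fin k, (-Real.log (c ℓ.succ)) * ∑ i, X i ω ℓ := by
      rw [hS]
      simp only [Finset.sum_apply, hYdef, Function.comp_apply, hgdef]
      rw [Finset.sum_comm]
      exact Finset.sum_congr rfl fun ℓ _ => by rw [Finset.mul_sum]
    show S ω ≤ ε
    rw [hSω, hε, Finset.mul_sum]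
    refine Finset.sum_le_sum fun ℓ _ => ?_
    have := mul_le_mul_of_nonneg_left (hb ℓ) (hlam ℓ)
    calc (-Real.log (c ℓ.succ)) * ∑ i, X i ω ℓ
        ≤ (-Real.log (c ℓ.succ)) * ((n:ℝ) * z ℓ.succ) := this
      _ = (n:ℝ) * ((-Real.log (c ℓ.succ)) * z ℓ.succ) := by ring
  -- final algebra
  have hdivpos : ∀ i, (0:ℝ) < μ i / z i := fun i => div_pos (hμpos i) (hzpos i)
  have hlogc : ∀ i : Fin (k+1),
      -Real.log (c i) = Real.log (μ i / z i) - Real.log (μ 0 / z 0) := by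
    intro i
    rw [hc]
    simp only []
    rw [Real.log_div (mul_pos (hzpos i) (hμpos 0)).ne' (mul_pos (hμpos i) (hzpos 0)).ne',
      Real.log_mul (hzpos i).ne' (hμpos 0).ne',
      Real.log_mul (hμpos i).ne' (hzpos 0).ne',
      Real.log_div (hμpos i).ne' (hzpos i).ne',
      Real.log_div (hμpos 0).ne' (hzpos 0).ne']
    ring
  have hfac : Real.exp (∑ ℓ : Fin k, (-Real.log (c ℓ.succ)) * z ℓ.succ) * (μ 0 / z 0)
      = ∏ i, (μ i / z i) ^ (z i) := by
    calc Real.exp (∑ ℓ : Fin k, (-Real.log (c ℓ.succ)) * z ℓ.succ) * (μ 0 / z 0)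
        = Real.exp ((∑ ℓ : Fin k, (-Real.log (c ℓ.succ)) * z ℓ.succ) +
            Real.log (μ 0 / z 0)) := by
          rw [Real.exp_add, Real.exp_log (hdivpos 0)]
      _ = Real.exp (∑ i, Real.log (μ i / z i) * z i) := by
          congr 1
          simp_rw [hlogc]
          rw [Fin.sum_univ_succ (f := fun i => Real.log (μ i / z i) * z i)]
          simp only [sub_mul]
          rw [Finset.sum_sub_distrib, ← Finset.mul_sum, hsz]
          ring
      _ = ∏ i, (μ i / z i) ^ (z i) := by
          rw [Real.exp_sum]
          exact Finset.prod_congr rfl fun i _ =>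
            (Real.rpow_def_of_pos (hdivpos i) (z i)).symm
  have hfinal : Real.exp (-(-1) * ε) * mgf S ℙ (-1) ≤ (∏ i, (μ i / z i) ^ (z i)) ^ n := by
    have hmgfS : mgf S ℙ (-1) = ∏ i : Fin n, mgf (Y i) ℙ (-1) :=
      hYindep.mgf_sum hYmeas Finset.univ
    have hprodle : ∏ i : Fin n, mgf (Y i) ℙ (-1) ≤ (μ 0 / z 0) ^ n := by
      calc ∏ i : Fin n, mgf (Y i) ℙ (-1)
          ≤ ∏ _i : Fin n, (μ 0 / z 0) :=
            Finset.prod_le_prod (fun i _ => mgf_nonneg) (fun i _ => hmgfle i)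
        _ = (μ 0 / z 0) ^ n := by rw [Finset.prod_const, Finset.card_univ, Fintype.card_fin]
    have hexpε : Real.exp (-(-1) * ε) =
        Real.exp (∑ ℓ : Fin k, (-Real.log (c ℓ.succ)) * z ℓ.succ) ^ n := by
      rw [neg_neg, one_mul, hε, Real.exp_nat_mul]
    calc Real.exp (-(-1) * ε) * mgf S ℙ (-1)
        ≤ Real.exp (-(-1) * ε) * (μ 0 / z 0) ^ n := by
          refine mul_le_mul_of_nonneg_left ?_ (Real.exp_pos _).le
          rw [hmgfS]; exact hprodle
      _ = (Real.exp (∑ ℓ : Fin k, (-Real.log (c ℓ.succ)) * z ℓ.succ) * (μ 0 / z 0)) ^ n := by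
          rw [hexpε, mul_pow]
      _ = (∏ i, (μ i / z i) ^ (z i)) ^ n := by rw [hfac]
  calc ℙ {ω | ∀ ℓ : Fin k, (∑ i, X i ω ℓ) / n ≤ z ℓ.succ}
      ≤ ℙ {ω | S ω ≤ ε} := measure_mono hsub
    _ = ENNReal.ofReal ((ℙ {ω | S ω ≤ ε}).toReal) :=
        (ENNReal.ofReal_toReal (measure_ne_top _ _)).symm
    _ ≤ ENNReal.ofReal (Real.exp (-(-1) * ε) * mgf S ℙ (-1)) :=
        ENNReal.ofReal_le_ofReal hchern
    _ ≤ ENNReal.ofReal ((∏ i, (μ i / z i) ^ (z i)) ^ n) :=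
        ENNReal.ofReal_le_ofReal hfinal
end

section
/- Let α_0, α_1, ..., α_k be positive reals and let μ_i = α_i / Σ_{ℓ=0}^k α_ℓ for i = 0, 1, ..., k. Let X_1, ..., X_n be independent identically distributed random vectors of dimension k, each taking values in the probability simplex {x ∈ R^k : x_ℓ ≥ 0, Σ_{ℓ=1}^k x_ℓ ≤ 1} and satisfying E[X_{ℓ,i}] = μ_ℓ for ℓ = 1, ..., k (as holds when (X_{0,i}, X_{1,i}, ..., X_{k,i}) is Dirichlet distributed with parameter (α_0, ..., α_k)). Let X̄_n = (1/n) Σ_{i=1}^n X_i. Let z_0, z_1, ..., z_k be positive reals with Σ_{ℓ=0}^k z_ℓ = 1, and suppose z_ℓ ≥ μ_ℓ for all ℓ = 1, ..., k. Then Pr{X̄_n ≥ z componentwise} ≤ [∏_{i=0}^k (μ_i / z_i)^{z_i}]^n, where z = (z_1, ..., z_k). -/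
open MeasureTheory ProbabilityTheory Finset

/-- Concentration inequality (upper tail) for i.i.d. random vectors in the simplex
whose coordinate means are `μ i = α i / ∑ α` (as for the Dirichlet distribution
with parameter `α`): if `μ ≤ z` componentwise, then
`Pr{X̄ₙ ≥ z} ≤ (∏_{i=0}^k (μ i / z i)^(z i))^n`. -/
theorem dirichlet_concentration_ge
    {Ω : Type*} [MeasureSpace Ω] [IsProbabilityMeasure (ℙ : Measure Ω)]
    (n k : ℕ) (hn : 0 < n)
    (α : Fin (k + 1) → ℝ) (hα : ∀ i, 0 < α i)
    (μ : Fin (k + 1) → ℝ) (hμ : ∀ i, μ i = α i / ∑ l, α l)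
    (X : Fin n → Ω → Fin k → ℝ)
    (hmeas : ∀ i, Measurable (X i))
    (hindep : iIndepFun X ℙ)
    (hident : ∀ i j, IdentDistrib (X i) (X j) ℙ ℙ)
    (hnonneg : ∀ i ℓ ω, 0 ≤ X i ω ℓ)
    (hsimplex : ∀ i ω, ∑ ℓ, X i ω ℓ ≤ 1)
    (hmean : ∀ (i : Fin n) (ℓ : Fin k), ∫ ω, X i ω ℓ = μ ℓ.succ)
    (z : Fin (k + 1) → ℝ) (hzpos : ∀ i, 0 < z i) (hzsum : ∑ i, z i = 1)
    (hzμ : ∀ ℓ : Fin k, μ ℓ.succ ≤ z ℓ.succ) :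
    ℙ {ω | ∀ ℓ : Fin k, z ℓ.succ ≤ (∑ i, X i ω ℓ) / n} ≤
      ENNReal.ofReal ((∏ i, (μ i / z i) ^ (z i)) ^ n) := by
  -- basic positivity facts
  have hS : (0 : ℝ) < ∑ l, α l := Finset.sum_pos (fun i _ => hα i) univ_nonempty
  have hμpos : ∀ i, 0 < μ i := fun i => by rw [hμ i]; exact div_pos (hα i) hS
  have hμsum : ∑ i, μ i = 1 := by
    simp only [hμ]; rw [← Finset.sum_div, div_self hS.ne']
  have hz0μ0 : z 0 ≤ μ 0 := by
    rw [Fin.sum_univ_succ] at hzsum hμsum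
    have : ∑ ℓ : Fin k, μ ℓ.succ ≤ ∑ ℓ : Fin k, z ℓ.succ :=
      Finset.sum_le_sum fun ℓ _ => hzμ ℓ
    linarith
  -- the tilting parameters
  set t : Fin k → ℝ := fun ℓ => Real.log (z ℓ.succ * μ 0 / (μ ℓ.succ * z 0)) with ht_def
  have hratio : ∀ ℓ : Fin k, (1 : ℝ) ≤ z ℓ.succ * μ 0 / (μ ℓ.succ * z 0) := by
    intro ℓ
    rw [le_div_iff₀ (mul_pos (hμpos ℓ.succ) (hzpos 0)), one_mul]
    exact mul_le_mul (hzμ ℓ) hz0μ0 (hzpos 0).le (hzpos ℓ.succ).le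
  have ht0 : ∀ ℓ, 0 ≤ t ℓ := fun ℓ => Real.log_nonneg (hratio ℓ)
  have hexp_t : ∀ ℓ, Real.exp (t ℓ) = z ℓ.succ * μ 0 / (μ ℓ.succ * z 0) := fun ℓ =>
    Real.exp_log (lt_of_lt_of_le one_pos (hratio ℓ))
  -- the tilted variables
  set φ : (Fin k → ℝ) → ℝ := fun x => ∑ ℓ, t ℓ * x ℓ with hφ_def
  have hφmeas : Measurable φ :=
    Finset.measurable_sum _ fun ℓ _ => (measurable_pi_apply ℓ).const_mul _
  set V : Fin n → Ω → ℝ := fun i => φ ∘ X i with hV_def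
  have hVmeas : ∀ i, Measurable (V i) := fun i => hφmeas.comp (hmeas i)
  have hVindep : iIndepFun V ℙ :=
    hindep.comp (fun _ => φ) (fun _ => hφmeas)
  -- coordinates are in [0,1]
  have hXle1 : ∀ i ℓ ω, X i ω ℓ ≤ 1 := fun i ℓ ω =>
    le_trans (Finset.single_le_sum (fun j _ => hnonneg i j ω) (mem_univ ℓ)) (hsimplex i ω)
  have hXint : ∀ i ℓ, Integrable (fun ω => X i ω ℓ) ℙ := by
    intro i ℓ
    refine (integrable_const (1 : ℝ)).mono'
      ((measurable_pi_apply ℓ).comp (hmeas i)).aestronglyMeasurable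
      (Filter.Eventually.of_forall fun ω => ?_)
    rw [Real.norm_eq_abs, abs_of_nonneg (hnonneg i ℓ ω)]; exact hXle1 i ℓ ω
  -- V is bounded, exp V integrable
  have hVbound : ∀ i ω, V i ω ≤ ∑ ℓ, t ℓ := by
    intro i ω
    refine Finset.sum_le_sum fun ℓ _ => ?_
    calc t ℓ * X i ω ℓ ≤ t ℓ * 1 := by
          exact mul_le_mul_of_nonneg_left (hXle1 i ℓ ω) (ht0 ℓ)
      _ = t ℓ := mul_one _
  have hVnonneg : ∀ i ω, 0 ≤ V i ω := fun i ω =>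
    Finset.sum_nonneg fun ℓ _ => mul_nonneg (ht0 ℓ) (hnonneg i ℓ ω)
  have hEint : ∀ i, Integrable (fun ω => Real.exp (V i ω)) ℙ := by
    intro i
    refine (integrable_const (Real.exp (∑ ℓ, t ℓ))).mono'
      ((hVmeas i).exp).aestronglyMeasurable (Filter.Eventually.of_forall fun ω => ?_)
    rw [Real.norm_eq_abs, abs_of_nonneg (Real.exp_nonneg _)]
    exact Real.exp_le_exp.2 (hVbound i ω)
  -- pointwise convexity bound
  have hconv : ∀ i ω, Real.exp (V i ω) ≤
      (1 - ∑ ℓ, X i ω ℓ) + ∑ ℓ, X i ω ℓ * Real.exp (t ℓ) := by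
    intro i ω
    have h := convexOn_exp.map_sum_le (t := univ)
      (w := Fin.cons (1 - ∑ ℓ, X i ω ℓ) (fun ℓ => X i ω ℓ))
      (p := Fin.cons 0 t)
      (fun j _ => by
        refine Fin.cases ?_ ?_ j
        · simpa using sub_nonneg.2 (hsimplex i ω)
        · intro ℓ; simpa using hnonneg i ℓ ω)
      (by rw [Fin.sum_cons]; ring)
      (fun j _ => Set.mem_univ _)
    rw [Fin.sum_univ_succ, Fin.sum_univ_succ] at h
    simp only [Fin.cons_zero, Fin.cons_succ, smul_eq_mul, mul_zero, zero_add,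
      Real.exp_zero, mul_one] at h
    have hV : ∑ ℓ, X i ω ℓ * t ℓ = V i ω :=
      Finset.sum_congr rfl fun ℓ _ => mul_comm _ _
    rw [hV] at h
    exact h
  -- the integral bound E[exp V] ≤ μ 0 / z 0
  have hIbound : ∀ i, ∫ ω, Real.exp (V i ω) ≤ μ 0 / z 0 := by
    intro i
    have hGint : Integrable (fun ω =>
        (1 - ∑ ℓ, X i ω ℓ) + ∑ ℓ, X i ω ℓ * Real.exp (t ℓ)) ℙ := by
      refine Integrable.add (Integrable.sub (integrable_const 1) ?_) ?_
      · exact integrable_finset_sum _ fun ℓ _ => hXint i ℓ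
      · exact integrable_finset_sum _ fun ℓ _ => (hXint i ℓ).mul_const _
    calc ∫ ω, Real.exp (V i ω)
        ≤ ∫ ω, ((1 - ∑ ℓ, X i ω ℓ) + ∑ ℓ, X i ω ℓ * Real.exp (t ℓ)) :=
          integral_mono (hEint i) hGint (fun ω => hconv i ω)
      _ = (1 - ∑ ℓ : Fin k, μ ℓ.succ) + ∑ ℓ : Fin k, μ ℓ.succ * Real.exp (t ℓ) := by
          have hA : Integrable (fun ω => 1 - ∑ ℓ, X i ω ℓ) ℙ :=
            (integrable_const 1).sub (integrable_finset_sum _ fun ℓ _ => hXint i ℓ)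
          have hB : Integrable (fun ω => ∑ ℓ, X i ω ℓ * Real.exp (t ℓ)) ℙ :=
            integrable_finset_sum _ fun ℓ _ => (hXint i ℓ).mul_const _
          have hI1 : ∫ ω, (1 - ∑ ℓ, X i ω ℓ) = 1 - ∑ ℓ : Fin k, μ ℓ.succ := by
            rw [integral_sub (integrable_const 1)
                (integrable_finset_sum _ fun ℓ _ => hXint i ℓ),
              integral_const, integral_finset_sum _ (fun ℓ _ => hXint i ℓ)]
            have : ∑ ℓ : Fin k, ∫ ω, X i ω ℓ = ∑ ℓ : Fin k, μ ℓ.succ :=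
              Finset.sum_congr rfl fun ℓ _ => hmean i ℓ
            rw [this]; simp
          have hI2 : ∫ ω, (∑ ℓ, X i ω ℓ * Real.exp (t ℓ))
              = ∑ ℓ : Fin k, μ ℓ.succ * Real.exp (t ℓ) := by
            rw [integral_finset_sum _ (fun ℓ _ => (hXint i ℓ).mul_const _)]
            exact Finset.sum_congr rfl fun ℓ _ => by rw [integral_mul_const, hmean i ℓ]
          rw [integral_add hA hB, hI1, hI2]
      _ = μ 0 / z 0 := by
          have h1 : ∑ ℓ : Fin k, μ ℓ.succ = 1 - μ 0 := by
            rw [Fin.sum_univ_succ] at hμsum; linarith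
          have h2 : ∑ ℓ : Fin k, μ ℓ.succ * Real.exp (t ℓ)
              = (1 - z 0) * (μ 0 / z 0) := by
            have h3 : ∑ ℓ : Fin k, z ℓ.succ = 1 - z 0 := by
              rw [Fin.sum_univ_succ] at hzsum; linarith
            rw [← h3, Finset.sum_mul]
            refine Finset.sum_congr rfl fun ℓ _ => ?_
            rw [hexp_t ℓ]
            have h4 := (hμpos ℓ.succ).ne'
            have h5 := (hzpos 0).ne'
            field_simp
          rw [h1, h2]
          have h5 := (hzpos 0).ne'
          field_simp
          ring
  -- Chernoff bound
  set c : ℝ := ∑ ℓ, t ℓ * z ℓ.succ with hc_def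
  have hSmeas : Measurable (∑ i, V i) := by
    have h : (∑ i, V i) = fun ω => ∑ i, V i ω := by
      ext ω; simp [Finset.sum_apply]
    rw [h]; exact Finset.measurable_sum _ fun i _ => hVmeas i
  have hSint : Integrable (fun ω => Real.exp ((1:ℝ) * (∑ i, V i) ω)) ℙ := by
    refine (integrable_const (Real.exp (∑ i : Fin n, ∑ ℓ, t ℓ))).mono'
      ((hSmeas.const_mul 1).exp).aestronglyMeasurable
      (Filter.Eventually.of_forall fun ω => ?_)
    rw [Real.norm_eq_abs, abs_of_nonneg (Real.exp_nonneg _), one_mul]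
    have h : (∑ i, V i) ω = ∑ i, V i ω := Finset.sum_apply _ _ _
    rw [h]
    exact Real.exp_le_exp.2 (Finset.sum_le_sum fun i _ => hVbound i ω)
  have hcher := measure_ge_le_exp_mul_mgf (μ := ℙ) (X := ∑ i, V i) (t := 1)
    ((n : ℝ) * c) zero_le_one hSint
  have hmgf : mgf (∑ i, V i) ℙ 1 = ∏ i, mgf (V i) ℙ 1 := hVindep.mgf_sum hVmeas univ
  have hmgf_le : ∀ i, mgf (V i) ℙ 1 ≤ μ 0 / z 0 := by
    intro i
    simp only [mgf, one_mul]
    exact hIbound i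
  have hprod : ∏ i, mgf (V i) ℙ 1 ≤ (μ 0 / z 0) ^ n := by
    calc ∏ i, mgf (V i) ℙ 1 ≤ ∏ _i : Fin n, (μ 0 / z 0) :=
          Finset.prod_le_prod (fun i _ => mgf_nonneg) (fun i _ => hmgf_le i)
      _ = (μ 0 / z 0) ^ n := by simp [div_pow]
  -- event inclusion
  have hsubset : {ω | ∀ ℓ : Fin k, z ℓ.succ ≤ (∑ i, X i ω ℓ) / n}
      ⊆ {ω | (n:ℝ) * c ≤ (∑ i, V i) ω} := by
    intro ω hω
    simp only [Set.mem_setOf_eq] at hω ⊢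
    have hsum : (∑ i, V i) ω = ∑ ℓ, t ℓ * ∑ i, X i ω ℓ := by
      rw [Finset.sum_apply]
      simp only [hV_def, Function.comp, hφ_def]
      rw [Finset.sum_comm]
      exact Finset.sum_congr rfl fun ℓ _ => by rw [← Finset.mul_sum]
    rw [hsum, hc_def, Finset.mul_sum]
    refine Finset.sum_le_sum fun ℓ _ => ?_
    have hωℓ := hω ℓ
    have hnz : (0:ℝ) < n := Nat.cast_pos.2 hn
    rw [le_div_iff₀ hnz] at hωℓ
    calc (n:ℝ) * (t ℓ * z ℓ.succ) = t ℓ * (z ℓ.succ * n) := by ring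
      _ ≤ t ℓ * (∑ i, X i ω ℓ) := mul_le_mul_of_nonneg_left hωℓ (ht0 ℓ)
  have hmeasure : (ℙ {ω | ∀ ℓ : Fin k, z ℓ.succ ≤ (∑ i, X i ω ℓ) / n}).toReal
      ≤ Real.exp (-1 * ((n:ℝ) * c)) * (μ 0 / z 0) ^ n := by
    refine le_trans ?_ (le_trans hcher ?_)
    · exact ENNReal.toReal_mono (measure_ne_top _ _) (measure_mono hsubset)
    · rw [hmgf]
      exact mul_le_mul_of_nonneg_left hprod (Real.exp_nonneg _)
  -- key identity
  have hlog_t : ∀ ℓ : Fin k, t ℓ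
      = Real.log (μ 0 / z 0) - Real.log (μ ℓ.succ / z ℓ.succ) := by
    intro ℓ
    have h1 : z ℓ.succ * μ 0 / (μ ℓ.succ * z 0)
        = (μ 0 / z 0) / (μ ℓ.succ / z ℓ.succ) := by
      field_simp
    rw [ht_def]
    simp only []
    rw [h1, Real.log_div (div_pos (hμpos 0) (hzpos 0)).ne'
      (div_pos (hμpos ℓ.succ) (hzpos ℓ.succ)).ne']
  have hkey : Real.exp (-c) * (μ 0 / z 0) = ∏ i, (μ i / z i) ^ (z i) := by
    have hC : ∀ i, (μ i / z i : ℝ) ^ (z i)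
        = Real.exp (z i * Real.log (μ i / z i)) := fun i => by
      rw [Real.rpow_def_of_pos (div_pos (hμpos i) (hzpos i)), mul_comm]
    have hzs : ∑ ℓ : Fin k, z ℓ.succ = 1 - z 0 := by
      rw [Fin.sum_univ_succ] at hzsum; linarith
    calc Real.exp (-c) * (μ 0 / z 0)
        = Real.exp (-c + Real.log (μ 0 / z 0)) := by
          rw [Real.exp_add, Real.exp_log (div_pos (hμpos 0) (hzpos 0))]
      _ = Real.exp (∑ i, z i * Real.log (μ i / z i)) := by
          congr 1
          rw [Fin.sum_univ_succ, hc_def]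
          have h2 : ∑ ℓ : Fin k, t ℓ * z ℓ.succ
              = ∑ ℓ : Fin k, (Real.log (μ 0 / z 0) * z ℓ.succ
                - z ℓ.succ * Real.log (μ ℓ.succ / z ℓ.succ)) :=
            Finset.sum_congr rfl fun ℓ _ => by rw [hlog_t ℓ]; ring
          rw [h2, Finset.sum_sub_distrib, ← Finset.mul_sum, hzs]
          ring
      _ = ∏ i, (μ i / z i) ^ (z i) := by
          rw [Real.exp_sum]
          exact Finset.prod_congr rfl fun i _ => (hC i).symm
  have hfinal : Real.exp (-1 * ((n:ℝ) * c)) * (μ 0 / z 0) ^ n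
      = (∏ i, (μ i / z i) ^ (z i)) ^ n := by
    rw [show (-1 : ℝ) * ((n:ℝ) * c) = (n:ℝ) * (-c) by ring, Real.exp_nat_mul,
      ← mul_pow, hkey]
  rw [← ENNReal.ofReal_toReal (measure_ne_top ℙ _)]
  exact ENNReal.ofReal_le_ofReal (hfinal ▸ hmeasure)
end

section
/- Let x_1, ..., x_k be nonnegative real numbers with Σ_{ℓ=1}^k x_ℓ ≤ 1. Then for arbitrary real numbers t_1, ..., t_k, ∏_{ℓ=1}^k exp(t_ℓ x_ℓ) ≤ 1 − Σ_{ℓ=1}^k x_ℓ + Σ_{ℓ=1}^k x_ℓ exp(t_ℓ). -/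
open Finset

/-- For nonnegative `x₁, ..., x_k` with `∑ x_ℓ ≤ 1` and arbitrary reals `t₁, ..., t_k`,
`∏ exp(t_ℓ x_ℓ) ≤ 1 − ∑ x_ℓ + ∑ x_ℓ exp(t_ℓ)`. -/
theorem prod_exp_le (k : ℕ) (x t : Fin k → ℝ)
    (hx : ∀ ℓ, 0 ≤ x ℓ) (hsum : ∑ ℓ, x ℓ ≤ 1) :
    ∏ ℓ, Real.exp (t ℓ * x ℓ) ≤ 1 - ∑ ℓ, x ℓ + ∑ ℓ, x ℓ * Real.exp (t ℓ) := by
  rw [← Real.exp_sum]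
  set w : Fin (k + 1) → ℝ := Fin.cons (1 - ∑ ℓ, x ℓ) x with hw
  set p : Fin (k + 1) → ℝ := Fin.cons 0 t with hp
  have h := convexOn_exp.map_sum_le (t := Finset.univ) (w := w) (p := p)
    (fun i _ => by
      refine Fin.cases ?_ ?_ i
      · simpa [hw] using hsum
      · intro j; simpa [hw] using hx j)
    (by simp [hw, Fin.sum_univ_succ])
    (fun i _ => Set.mem_univ _)
  simpa [hw, hp, Fin.sum_univ_succ, mul_comm, sub_add_eq_add_sub, add_comm, add_sub_assoc] using h
end

section
/- Let X_1, ..., X_n be independent random vectors of dimension k, where X_i = (X_{1,i}, ..., X_{k,i}), such that for every i, X_{ℓ,i} ≥ 0 for all ℓ and Σ_{ℓ=1}^k X_{ℓ,i} ≤ 1. Let μ_ℓ = (1/n) Σ_{i=1}^n E[X_{ℓ,i}] for ℓ = 1, ..., k and μ_0 = 1 − Σ_{ℓ=1}^k μ_ℓ. Then for arbitrary real numbers t_1, ..., t_k, ∏_{i=1}^n E[∏_{ℓ=1}^k exp(t_ℓ X_{ℓ,i})] ≤ (μ_0 + Σ_{ℓ=1}^k μ_ℓ exp(t_ℓ))^n.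 -/
open MeasureTheory ProbabilityTheory Finset

-- AM-GM: product ≤ (average)^n
lemma amgm {n : ℕ} (hn : 0 < n) (a : Fin n → ℝ) (ha : ∀ i, 0 ≤ a i) :
    ∏ i, a i ≤ ((∑ i, a i) / n) ^ n := by
  have hn' : (n : ℝ) ≠ 0 := Nat.cast_ne_zero.mpr hn.ne'
  have key := Real.geom_mean_le_arith_mean_weighted (s := Finset.univ)
    (fun _ : Fin n => (1 : ℝ) / n) a
    (fun i _ => by positivity)
    (by simp [Finset.card_univ]; field_simp)
    (fun i _ => ha i)
  have hrw : ∑ i, (1 : ℝ) / n * a i = (∑ i, a i) / n := by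
    rw [Finset.sum_div]
    exact Finset.sum_congr rfl fun i _ => by rw [one_div, inv_mul_eq_div]
  rw [hrw] at key
  have h1 : ∏ i, a i = (∏ i, a i ^ ((1:ℝ) / n)) ^ n := by
    rw [← Finset.prod_pow]
    congr 1; ext i
    rw [← Real.rpow_natCast (a i ^ ((1:ℝ)/n)) n, ← Real.rpow_mul (ha i)]
    field_simp
    simp
  rw [h1]
  exact pow_le_pow_left₀ (Finset.prod_nonneg fun i _ => Real.rpow_nonneg (ha i) _) key n

-- pointwise convexity bound
lemma pointwise {k : ℕ} (t x : Fin k → ℝ) (hx : ∀ ℓ, 0 ≤ x ℓ) (hs : ∑ ℓ, x ℓ ≤ 1) :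
    Real.exp (∑ ℓ, t ℓ * x ℓ) ≤ (1 - ∑ ℓ, x ℓ) + ∑ ℓ, x ℓ * Real.exp (t ℓ) := by
  have h := convexOn_exp.map_add_sum_le (t := Finset.univ) (w := x) (p := t)
    (v := 1 - ∑ ℓ, x ℓ) (q := 0)
    (fun ℓ _ => hx ℓ) (by ring) (fun ℓ _ => Set.mem_univ _)
    (by linarith) (Set.mem_univ _)
  simp only [smul_eq_mul, mul_zero, Real.exp_zero, mul_one] at h
  calc Real.exp (∑ ℓ, t ℓ * x ℓ)
      = Real.exp (0 + ∑ ℓ, x ℓ * t ℓ) := by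
        congr 1; rw [zero_add]; exact Finset.sum_congr rfl fun ℓ _ => mul_comm _ _
    _ ≤ (1 - ∑ ℓ, x ℓ) + ∑ ℓ, x ℓ * Real.exp (t ℓ) := h

/-- Bound on the product of multivariate moment generating functions of independent
random vectors in the simplex:
`∏ᵢ E[∏_ℓ exp(t_ℓ X_{ℓ,i})] ≤ (μ₀ + ∑_ℓ μ_ℓ exp(t_ℓ))^n`. -/
theorem prod_mgf_le
    {Ω : Type*} [MeasureSpace Ω] [IsProbabilityMeasure (ℙ : Measure Ω)]
    (n k : ℕ) (hn : 0 < n)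
    (X : Fin n → Fin k → Ω → ℝ)
    (hmeas : ∀ i ℓ, Measurable (X i ℓ))
    (hindep : iIndepFun
      (fun i => fun ω ℓ => X i ℓ ω) ℙ)
    (hnonneg : ∀ i ℓ ω, 0 ≤ X i ℓ ω)
    (hsum : ∀ i ω, ∑ ℓ, X i ℓ ω ≤ 1)
    (μ : Fin k → ℝ) (hμ : ∀ ℓ, μ ℓ = (∑ i, ∫ ω, X i ℓ ω) / n)
    (μ0 : ℝ) (hμ0 : μ0 = 1 - ∑ ℓ, μ ℓ)
    (t : Fin k → ℝ) :
    ∏ i, ∫ ω, ∏ ℓ, Real.exp (t ℓ * X i ℓ ω) ≤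
      (μ0 + ∑ ℓ, μ ℓ * Real.exp (t ℓ)) ^ n := by
  have hn' : (n : ℝ) ≠ 0 := Nat.cast_ne_zero.mpr hn.ne'
  -- integrability of each X i ℓ
  have hXint : ∀ i ℓ, Integrable (X i ℓ) ℙ := by
    intro i ℓ
    refine Integrable.mono' (integrable_const (1:ℝ)) (hmeas i ℓ).aestronglyMeasurable ?_
    filter_upwards with ω
    rw [Real.norm_eq_abs, abs_of_nonneg (hnonneg i ℓ ω)]
    calc X i ℓ ω ≤ ∑ m, X i m ω :=
          Finset.single_le_sum (fun m _ => hnonneg i m ω) (Finset.mem_univ ℓ)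
      _ ≤ 1 := hsum i ω
  set a : Fin n → ℝ := fun i =>
    (1 - ∑ ℓ, ∫ ω, X i ℓ ω) + ∑ ℓ, (∫ ω, X i ℓ ω) * Real.exp (t ℓ) with ha_def
  -- expectation bound for each i
  have hstep : ∀ i, ∫ ω, ∏ ℓ, Real.exp (t ℓ * X i ℓ ω) ≤ a i := by
    intro i
    have hint1 : Integrable (fun ω => ∏ ℓ, Real.exp (t ℓ * X i ℓ ω)) ℙ := by
      refine Integrable.mono' (integrable_const (Real.exp (∑ ℓ, |t ℓ|)))
        ((Finset.measurable_prod Finset.univ fun ℓ _ =>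
          ((hmeas i ℓ).const_mul (t ℓ)).exp).aestronglyMeasurable) ?_
      filter_upwards with ω
      rw [Real.norm_eq_abs, abs_of_nonneg (Finset.prod_nonneg fun ℓ _ => (Real.exp_pos _).le),
        ← Real.exp_sum]
      apply Real.exp_le_exp.mpr
      apply Finset.sum_le_sum
      intro ℓ _
      calc t ℓ * X i ℓ ω ≤ |t ℓ * X i ℓ ω| := le_abs_self _
        _ = |t ℓ| * |X i ℓ ω| := abs_mul _ _
        _ ≤ |t ℓ| * 1 := by
            apply mul_le_mul_of_nonneg_left _ (abs_nonneg _)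
            rw [abs_of_nonneg (hnonneg i ℓ ω)]
            calc X i ℓ ω ≤ ∑ m, X i m ω :=
                  Finset.single_le_sum (fun m _ => hnonneg i m ω) (Finset.mem_univ ℓ)
              _ ≤ 1 := hsum i ω
        _ = |t ℓ| := mul_one _
    have hint2 : Integrable (fun ω => (1 - ∑ ℓ, X i ℓ ω) + ∑ ℓ, X i ℓ ω * Real.exp (t ℓ)) ℙ := by
      apply Integrable.add
      · exact (integrable_const (1:ℝ)).sub (integrable_finset_sum _ fun ℓ _ => hXint i ℓ)
      · exact integrable_finset_sum _ fun ℓ _ => (hXint i ℓ).mul_const _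
    calc ∫ ω, ∏ ℓ, Real.exp (t ℓ * X i ℓ ω)
        ≤ ∫ ω, ((1 - ∑ ℓ, X i ℓ ω) + ∑ ℓ, X i ℓ ω * Real.exp (t ℓ)) := by
          apply integral_mono hint1 hint2
          intro ω
          dsimp only
          rw [← Real.exp_sum]
          exact pointwise t (fun ℓ => X i ℓ ω) (fun ℓ => hnonneg i ℓ ω) (hsum i ω)
      _ = a i := by
          have hintS : Integrable (fun ω => ∑ ℓ, X i ℓ ω) ℙ :=
            integrable_finset_sum _ fun ℓ _ => hXint i ℓ
          have hintT : Integrable (fun ω => ∑ ℓ, X i ℓ ω * Real.exp (t ℓ)) ℙ :=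
            integrable_finset_sum _ fun ℓ _ => (hXint i ℓ).mul_const _
          have hint3 : Integrable (fun ω => 1 - ∑ ℓ, X i ℓ ω) ℙ :=
            (integrable_const (1:ℝ)).sub hintS
          rw [integral_add hint3 hintT,
            integral_sub (integrable_const (1:ℝ)) hintS,
            integral_const, integral_finset_sum _ (fun ℓ _ => hXint i ℓ),
            integral_finset_sum _ (fun ℓ _ => (hXint i ℓ).mul_const _)]
          simp [ha_def, integral_mul_const]
  have hEnn : ∀ i, 0 ≤ ∫ ω, ∏ ℓ, Real.exp (t ℓ * X i ℓ ω) :=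
    fun i => integral_nonneg fun ω => Finset.prod_nonneg fun ℓ _ => (Real.exp_pos _).le
  have hann : ∀ i, 0 ≤ a i := fun i => le_trans (hEnn i) (hstep i)
  calc ∏ i, ∫ ω, ∏ ℓ, Real.exp (t ℓ * X i ℓ ω)
      ≤ ∏ i, a i := Finset.prod_le_prod (fun i _ => hEnn i) (fun i _ => hstep i)
    _ ≤ ((∑ i, a i) / n) ^ n := amgm hn a hann
    _ = (μ0 + ∑ ℓ, μ ℓ * Real.exp (t ℓ)) ^ n := by
        congr 1
        have : ∑ i, a i = n - ∑ ℓ, (∑ i, ∫ ω, X i ℓ ω)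
            + ∑ ℓ, (∑ i, ∫ ω, X i ℓ ω) * Real.exp (t ℓ) := by
          simp only [ha_def, Finset.sum_add_distrib, Finset.sum_sub_distrib,
            Finset.sum_const, Finset.card_univ, Fintype.card_fin, nsmul_eq_mul, mul_one]
          congr 1
          · congr 1
            exact Finset.sum_comm
          · rw [Finset.sum_comm]
            exact Finset.sum_congr rfl fun ℓ _ => (Finset.sum_mul _ _ _).symm
        rw [this, hμ0]
        have e1 : ∑ ℓ, (∑ i, ∫ ω, X i ℓ ω) = (∑ ℓ, μ ℓ) * n := by
          rw [Finset.sum_mul]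
          exact Finset.sum_congr rfl fun ℓ _ => by rw [hμ ℓ]; field_simp
        have e2 : ∑ ℓ, (∑ i, ∫ ω, X i ℓ ω) * Real.exp (t ℓ) =
            (∑ ℓ, μ ℓ * Real.exp (t ℓ)) * n := by
          rw [Finset.sum_mul]
          refine Finset.sum_congr rfl fun ℓ _ => ?_
          rw [hμ ℓ]; field_simp
        rw [e1, e2]
        field_simp
end
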